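/- Let P be a finite set of points in the Euclidean plane and let (V, G) be a Steiner network for P whose length equals the Steiner minimal length of P. Suppose V = V₁ ∪ V₂ with V₁ ∩ V₂ = {p} for some point p ∈ V, suppose every edge of G joins two vertices of V₁ or two vertices of V₂, and suppose the subgraphs G₁ and G₂ of G induced on V₁ and V₂ are each connected. Then (V₂, G₂) is a Steiner network for (P ∩ V₂) ∪ {p} whose length equals the Steiner minimal length of (P ∩ V₂) ∪ {p}; that is, the length of G₂ is at most the length of every Steiner network for (P ∩ V₂) ∪ {p}. -/

import Mathlib

open Real EuclideanGeometry
open scoped Classical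

noncomputable section

abbrev Pt : Type := EuclideanSpace ℝ (Fin 2)

/-- A Steiner network for a finite set `P` of points in the plane: a finite set `V` of
points containing `P`, together with a connected simple graph on `V`. -/
structure SteinerNetwork (P : Finset Pt) where
  V : Finset Pt
  terminals_subset : P ⊆ V
  G : SimpleGraph V
  connected : G.Connected

/-- The total Euclidean length of a graph on a finite set of points in the plane. -/
noncomputable def graphLength {W : Finset Pt} (H : SimpleGraph W) : ℝ := by
  classical
  exact ∑ e ∈ H.edgeFinset,
    Sym2.lift ⟨fun (u v : W) => dist (u : Pt) (v : Pt), fun _ _ => dist_comm _ _⟩ e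

/-- The length of a Steiner network. -/
noncomputable def SteinerNetwork.length {P : Finset Pt} (N : SteinerNetwork P) : ℝ :=
  graphLength N.G

/-- The Steiner minimal length of a finite set of points in the plane. -/
noncomputable def steinerMinLength (P : Finset Pt) : ℝ :=
  sInf (Set.range fun N : SteinerNetwork P => N.length)


/-- The subgraph of a Steiner network induced on a subset `W` of its vertices. -/
def inducedOn {P : Finset Pt} (N : SteinerNetwork P) (W : Finset Pt)
    (hW : W ⊆ N.V) : SimpleGraph W where
  Adj a b := N.G.Adj ⟨(a : Pt), hW a.2⟩ ⟨(b : Pt), hW b.2⟩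
  symm := ⟨fun _ _ h => N.G.adj_symm h⟩
  loopless := ⟨fun _ h => N.G.irrefl h⟩

noncomputable def elen : Sym2 Pt → ℝ :=
  Sym2.lift ⟨fun u v => dist u v, fun _ _ => dist_comm _ _⟩

lemma elen_nonneg (e : Sym2 Pt) : 0 ≤ elen e := by
  induction e using Sym2.ind with
  | _ x y => simpa [elen] using dist_nonneg

lemma graphLength_eq_sum_image {W : Finset Pt} (H : SimpleGraph W) :
    graphLength H = ∑ e ∈ H.edgeFinset.image (Sym2.map (Subtype.val)), elen e := by
  rw [Finset.sum_image (fun a _ b _ h => Sym2.map.injective Subtype.val_injective h)]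
  unfold graphLength
  apply Finset.sum_congr rfl
  intro e _
  induction e using Sym2.ind with
  | _ x y => simp [elen]

lemma graphLength_nonneg {W : Finset Pt} (H : SimpleGraph W) : 0 ≤ graphLength H := by
  rw [graphLength_eq_sum_image]
  exact Finset.sum_nonneg fun e _ => elen_nonneg e

lemma mem_image_edges {W : Finset Pt} (H : SimpleGraph W) (e : Sym2 Pt) :
    e ∈ H.edgeFinset.image (Sym2.map (Subtype.val)) ↔
      ∃ a b : W, H.Adj a b ∧ e = s((a : Pt), (b : Pt)) := by
  constructor
  · intro h
    obtain ⟨e', he', rfl⟩ := Finset.mem_image.1 h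
    revert he'
    induction e' using Sym2.ind with
    | _ a b => intro he'; exact ⟨a, b, by simpa using he', by simp⟩
  · rintro ⟨a, b, hab, rfl⟩
    exact Finset.mem_image.2 ⟨s(a, b), by simpa using hab, by simp⟩

lemma sum_union_le_real {α : Type*} [DecidableEq α] {s t : Finset α} {f : α → ℝ}
    (hf : ∀ a, 0 ≤ f a) : ∑ a ∈ s ∪ t, f a ≤ ∑ a ∈ s, f a + ∑ a ∈ t, f a := by
  classical
  rw [← Finset.union_sdiff_self_eq_union, Finset.sum_union Finset.disjoint_sdiff]
  refine add_le_add (le_refl _) (Finset.sum_le_sum_of_subset_of_nonneg (Finset.sdiff_subset) fun i _ _ => hf i)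

/-- glue two graphs on a union of vertex sets -/
def glue (A B : Finset Pt) (GA : SimpleGraph A) (GB : SimpleGraph B) :
    SimpleGraph ((A ∪ B : Finset Pt) : Finset Pt) where
  Adj a b := (∃ (ha : (a : Pt) ∈ A) (hb : (b : Pt) ∈ A), GA.Adj ⟨a, ha⟩ ⟨b, hb⟩) ∨
    (∃ (ha : (a : Pt) ∈ B) (hb : (b : Pt) ∈ B), GB.Adj ⟨a, ha⟩ ⟨b, hb⟩)
  symm := ⟨fun a b h => by
    rcases h with ⟨ha, hb, h⟩ | ⟨ha, hb, h⟩
    exacts [Or.inl ⟨hb, ha, h.symm⟩, Or.inr ⟨hb, ha, h.symm⟩]⟩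
  loopless := ⟨fun a h => by
    rcases h with ⟨ha, hb, h⟩ | ⟨ha, hb, h⟩
    exacts [GA.loopless.irrefl _ h, GB.loopless.irrefl _ h]⟩

lemma glue_connected {A B : Finset Pt} {GA : SimpleGraph A} {GB : SimpleGraph B}
    (hA : GA.Connected) (hB : GB.Connected) {p : Pt} (hpA : p ∈ A) (hpB : p ∈ B) :
    (glue A B GA GB).Connected := by
  have hpU : p ∈ A ∪ B := Finset.mem_union.2 (Or.inl hpA)
  rw [SimpleGraph.connected_iff]
  refine ⟨?_, ⟨⟨p, hpU⟩⟩⟩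
  let fA : GA →g glue A B GA GB :=
    ⟨fun a => ⟨a, Finset.mem_union.2 (Or.inl a.2)⟩, fun {a b} h => Or.inl ⟨a.2, b.2, h⟩⟩
  let fB : GB →g glue A B GA GB :=
    ⟨fun a => ⟨a, Finset.mem_union.2 (Or.inr a.2)⟩, fun {a b} h => Or.inr ⟨a.2, b.2, h⟩⟩
  have key : ∀ u : ((A ∪ B : Finset Pt) : Finset Pt),
      (glue A B GA GB).Reachable u ⟨p, hpU⟩ := by
    intro u
    rcases Finset.mem_union.1 u.2 with hu | hu
    · exact (hA.preconnected ⟨u, hu⟩ ⟨p, hpA⟩).map fA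
    · exact (hB.preconnected ⟨u, hu⟩ ⟨p, hpB⟩).map fB
  intro u v
  exact (key u).trans (key v).symm


/-- If a minimal-length Steiner network for `P` splits as `V = V₁ ∪ V₂` with
`V₁ ∩ V₂ = {p}`, with every edge inside `V₁` or inside `V₂` and both induced
subgraphs connected, then the induced subgraph on `V₂` is a Steiner network for
`(P ∩ V₂) ∪ {p}` of minimal length. -/
theorem induced_part_is_minimal (P : Finset Pt) (N : SteinerNetwork P)
    (hmin : N.length = steinerMinLength P)
    (V₁ V₂ : Finset Pt) (p : Pt) (hp : p ∈ N.V)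
    (hunion : N.V = V₁ ∪ V₂) (hinter : V₁ ∩ V₂ = {p})
    (h1 : V₁ ⊆ N.V) (h2 : V₂ ⊆ N.V)
    (hedges : ∀ u v : N.V, N.G.Adj u v →
      (((u : Pt) ∈ V₁ ∧ (v : Pt) ∈ V₁) ∨ ((u : Pt) ∈ V₂ ∧ (v : Pt) ∈ V₂)))
    (hG1 : (inducedOn N V₁ h1).Connected) (hG2 : (inducedOn N V₂ h2).Connected) :
    (P ∩ V₂ ∪ {p}) ⊆ V₂ ∧
      ∀ M : SteinerNetwork (P ∩ V₂ ∪ {p}),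
        graphLength (inducedOn N V₂ h2) ≤ M.length := by
  have hpmem : p ∈ V₁ ∩ V₂ := by rw [hinter]; exact Finset.mem_singleton_self p
  have hpV1 : p ∈ V₁ := (Finset.mem_inter.1 hpmem).1
  have hpV2 : p ∈ V₂ := (Finset.mem_inter.1 hpmem).2
  refine ⟨?_, ?_⟩
  · intro x hx
    rcases Finset.mem_union.1 hx with h | h
    · exact (Finset.mem_inter.1 h).2
    · rw [Finset.mem_singleton.1 h]; exact hpV2
  intro M
  have hSdecomp : N.G.edgeFinset.image (Sym2.map Subtype.val) =
      (inducedOn N V₁ h1).edgeFinset.image (Sym2.map Subtype.val) ∪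
        (inducedOn N V₂ h2).edgeFinset.image (Sym2.map Subtype.val) := by
    ext e
    rw [Finset.mem_union, mem_image_edges, mem_image_edges, mem_image_edges]
    constructor
    · rintro ⟨a, b, hab, rfl⟩
      rcases hedges a b hab with ⟨ha, hb⟩ | ⟨ha, hb⟩
      · exact Or.inl ⟨⟨a, ha⟩, ⟨b, hb⟩, hab, rfl⟩
      · exact Or.inr ⟨⟨a, ha⟩, ⟨b, hb⟩, hab, rfl⟩
    · rintro (⟨a, b, hab, rfl⟩ | ⟨a, b, hab, rfl⟩)
      · exact ⟨⟨a, h1 a.2⟩, ⟨b, h1 b.2⟩, hab, rfl⟩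
      · exact ⟨⟨a, h2 a.2⟩, ⟨b, h2 b.2⟩, hab, rfl⟩
  have hdisj : Disjoint
      ((inducedOn N V₁ h1).edgeFinset.image (Sym2.map Subtype.val))
      ((inducedOn N V₂ h2).edgeFinset.image (Sym2.map Subtype.val)) := by
    rw [Finset.disjoint_left]
    intro e he1 he2
    obtain ⟨a, b, hab, rfl⟩ := (mem_image_edges _ _).1 he1
    obtain ⟨c, d, hcd, hcd'⟩ := (mem_image_edges _ _).1 he2
    have hav : (a : Pt) ∈ V₂ ∧ (b : Pt) ∈ V₂ := by
      rcases Sym2.eq_iff.1 hcd' with ⟨h, h'⟩ | ⟨h, h'⟩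
      · exact ⟨h ▸ c.2, h' ▸ d.2⟩
      · exact ⟨h ▸ d.2, h' ▸ c.2⟩
    have ha' : (a : Pt) = p := by
      have : (a : Pt) ∈ V₁ ∩ V₂ := Finset.mem_inter.2 ⟨a.2, hav.1⟩
      rwa [hinter, Finset.mem_singleton] at this
    have hb' : (b : Pt) = p := by
      have : (b : Pt) ∈ V₁ ∩ V₂ := Finset.mem_inter.2 ⟨b.2, hav.2⟩
      rwa [hinter, Finset.mem_singleton] at this
    have : a = b := Subtype.ext (ha'.trans hb'.symm)
    exact (inducedOn N V₁ h1).loopless.irrefl a (this ▸ hab)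
  have hlen : N.length = graphLength (inducedOn N V₁ h1) + graphLength (inducedOn N V₂ h2) := by
    show graphLength N.G = _
    rw [graphLength_eq_sum_image, graphLength_eq_sum_image, graphLength_eq_sum_image,
      hSdecomp, Finset.sum_union hdisj]
  have hpM : p ∈ M.V := M.terminals_subset (Finset.mem_union.2 (Or.inr (Finset.mem_singleton_self p)))
  let N' : SteinerNetwork P :=
    { V := V₁ ∪ M.V
      terminals_subset := by
        intro x hx
        have hx' : x ∈ V₁ ∪ V₂ := hunion ▸ N.terminals_subset hx
        rcases Finset.mem_union.1 hx' with h | h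
        · exact Finset.mem_union.2 (Or.inl h)
        · exact Finset.mem_union.2 (Or.inr (M.terminals_subset
            (Finset.mem_union.2 (Or.inl (Finset.mem_inter.2 ⟨hx, h⟩)))))
      G := glue V₁ M.V (inducedOn N V₁ h1) M.G
      connected := glue_connected hG1 M.connected hpV1 hpM }
  have hbdd : BddBelow (Set.range fun K : SteinerNetwork P => K.length) := by
    refine ⟨0, ?_⟩
    rintro _ ⟨K, rfl⟩
    exact graphLength_nonneg K.G
  have hstep : steinerMinLength P ≤ N'.length := csInf_le hbdd ⟨N', rfl⟩
  have hN'len : N'.length ≤ graphLength (inducedOn N V₁ h1) + M.length := by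
    show graphLength (glue V₁ M.V (inducedOn N V₁ h1) M.G) ≤ _
    rw [graphLength_eq_sum_image, graphLength_eq_sum_image,
      show M.length = ∑ e ∈ M.G.edgeFinset.image (Sym2.map Subtype.val), elen e from
        graphLength_eq_sum_image M.G]
    refine le_trans (Finset.sum_le_sum_of_subset_of_nonneg ?_ fun i _ _ => elen_nonneg i)
      (sum_union_le_real fun a => elen_nonneg a)
    intro e he
    obtain ⟨a, b, hab, rfl⟩ := (mem_image_edges _ _).1 he
    rcases hab with ⟨ha, hb, h⟩ | ⟨ha, hb, h⟩
    · exact Finset.mem_union.2 (Or.inl ((mem_image_edges _ _).2 ⟨⟨a, ha⟩, ⟨b, hb⟩, h, rfl⟩))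
    · exact Finset.mem_union.2 (Or.inr ((mem_image_edges _ _).2 ⟨⟨a, ha⟩, ⟨b, hb⟩, h, rfl⟩))
  have := hmin ▸ hstep
  linarith

end
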